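/- arXiv:math-ph/0406005 — 3 statements merged into one kernel-verified Lean document; each statement's English description precedes it below -/
import Mathlib

section
/- Let n ≥ 1, let v₁, …, vₙ be distinct points of ℝ³, and let Ω₁, …, Ωₙ be real numbers, not all zero, with Σₐ Ωₐ = 0. Let S = { y ∈ ℝⁿ : |yₐ − y_b| ≤ ‖vₐ − v_b‖ for all a, b }. Then there exists y* ∈ S with y*₁ = 0 such that Σₐ Ωₐ yₐ ≤ Σₐ Ωₐ y*ₐ for every y ∈ S, and moreover Σₐ Ωₐ y*ₐ > 0. -/
/-- Finiteness, attainment and strict positivity of the lower bound in Theorem 1: for distinct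
points `v₁, …, vₙ` of `ℝ³` and reals `Ω₁, …, Ωₙ`, not all zero, with `Σₐ Ωₐ = 0`, the linear
functional `y ↦ Σₐ Ωₐ yₐ` attains its maximum over
`S = { y : |yₐ − y_b| ≤ ‖vₐ − v_b‖ for all a, b }` at some `y*` with `y*₁ = 0`, and the maximal
value is strictly positive. -/
theorem stmt6 {n : ℕ} (hn : 1 ≤ n) (v : Fin n → EuclideanSpace ℝ (Fin 3))
    (hv : Function.Injective v) (Ω : Fin n → ℝ) (hΩ : Ω ≠ 0)
    (hsum : ∑ a, Ω a = 0) :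
    ∃ ystar ∈ {y : Fin n → ℝ | ∀ a b, |y a - y b| ≤ ‖v a - v b‖},
      ystar ⟨0, hn⟩ = 0 ∧
        (∀ y ∈ {y : Fin n → ℝ | ∀ a b, |y a - y b| ≤ ‖v a - v b‖},
          ∑ a, Ω a * y a ≤ ∑ a, Ω a * ystar a) ∧
        0 < ∑ a, Ω a * ystar a := by
  classical
  set i₀ : Fin n := ⟨0, hn⟩ with hi₀
  set K : Set (Fin n → ℝ) :=
    {y | y i₀ = 0 ∧ ∀ a b, |y a - y b| ≤ ‖v a - v b‖} with hK
  set f : (Fin n → ℝ) → ℝ := fun y => ∑ a, Ω a * y a with hf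
  -- K is closed
  have hcl : IsClosed K := by
    have : K = {y : Fin n → ℝ | y i₀ = 0} ∩
        ⋂ a, ⋂ b, {y : Fin n → ℝ | |y a - y b| ≤ ‖v a - v b‖} := by
      ext y
      simp [hK, Set.mem_iInter]
    rw [this]
    exact (isClosed_eq (continuous_apply i₀) continuous_const).inter
      (isClosed_iInter fun a => isClosed_iInter fun b =>
        isClosed_le (((continuous_apply a).sub (continuous_apply b)).abs) continuous_const)
  -- K is contained in a closed ball
  set M : ℝ := ∑ a, ‖v a - v i₀‖ with hM
  have hMnn : ∀ a, ‖v a - v i₀‖ ≤ M := by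
    intro a
    exact Finset.single_le_sum (f := fun a => ‖v a - v i₀‖)
      (fun b _ => norm_nonneg _) (Finset.mem_univ a)
  have hM0 : (0:ℝ) ≤ M := Finset.sum_nonneg fun a _ => norm_nonneg _
  have hsub : K ⊆ Metric.closedBall 0 M := by
    intro y hy
    rw [Metric.mem_closedBall, dist_zero_right]
    rw [pi_norm_le_iff_of_nonneg hM0]
    intro a
    have := hy.2 a i₀
    rw [hy.1] at this
    simpa using this.trans (hMnn a)
  have hKc : IsCompact K :=
    (isCompact_closedBall (0 : Fin n → ℝ) M).of_isClosed_subset hcl hsub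
  have hne : K.Nonempty := ⟨0, by simp [hK]⟩
  have hfc : Continuous f :=
    continuous_finset_sum _ fun a _ => continuous_const.mul (continuous_apply a)
  obtain ⟨ystar, hyK, hmax'⟩ := hKc.exists_isMaxOn hne hfc.continuousOn
  have hmax : ∀ z ∈ K, f z ≤ f ystar := fun z hz => hmax' hz
  -- translation: any y in S can be shifted into K with the same value of f
  have htrans : ∀ y ∈ {y : Fin n → ℝ | ∀ a b, |y a - y b| ≤ ‖v a - v b‖},
      f y ≤ f ystar := by
    intro y hy
    set z : Fin n → ℝ := fun a => y a - y i₀ with hz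
    have hzK : z ∈ K := by
      refine ⟨by simp [hz], fun a b => ?_⟩
      simpa [hz] using hy a b
    have : f z = f y := by
      simp only [hf, hz, mul_sub, Finset.sum_sub_distrib, ← Finset.sum_mul, hsum]
      ring
    calc f y = f z := this.symm
    _ ≤ f ystar := hmax z hzK
  -- positivity: construct an element of S with positive value
  obtain ⟨a₀, ha₀⟩ : ∃ a, Ω a ≠ 0 := by
    by_contra h
    push_neg at h
    exact hΩ (funext fun a => h a)
  set T : Finset (Fin n) := Finset.univ.erase a₀ with hT
  have hTne : T.Nonempty := by
    by_contra h
    rw [Finset.not_nonempty_iff_eq_empty] at h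
    have huniv : (Finset.univ : Finset (Fin n)) = {a₀} := by
      ext b
      simp only [Finset.mem_univ, Finset.mem_singleton, true_iff]
      by_contra hb
      have : b ∈ T := by simp [hT, hb]
      simp [h] at this
    rw [huniv, Finset.sum_singleton] at hsum
    exact ha₀ hsum
  set g : Fin n → ℝ := fun a => T.inf' hTne fun b => ‖v a - v b‖ with hg
  have hgnn : ∀ a, 0 ≤ g a := by
    intro a
    rw [hg]
    exact Finset.le_inf' hTne _ fun b _ => norm_nonneg _
  have hgzero : ∀ b ∈ T, g b = 0 := by
    intro b hb
    have h1 : g b ≤ 0 := by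
      have := Finset.inf'_le (fun c => ‖v b - v c‖) hb
      exact this.trans_eq (by simp)
    linarith [hgnn b]
  have hgpos : 0 < g a₀ := by
    rw [hg, Finset.lt_inf'_iff]
    intro b hb
    have hne' : v a₀ ≠ v b := fun h => (Finset.mem_erase.mp hb).1 (hv h).symm
    rw [norm_pos_iff, sub_ne_zero]
    exact hne'
  have key : ∀ x y : Fin n, g x ≤ ‖v x - v y‖ + g y := by
    intro x y
    obtain ⟨b₀, hb₀, hgy⟩ := T.exists_mem_eq_inf' hTne fun b => ‖v y - v b‖
    have h1 : g x ≤ ‖v x - v b₀‖ := Finset.inf'_le _ hb₀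
    have h2 : ‖v x - v b₀‖ ≤ ‖v x - v y‖ + ‖v y - v b₀‖ := norm_sub_le_norm_sub_add_norm_sub _ _ _
    have hgy' : g y = ‖v y - v b₀‖ := hgy
    linarith
  have hglip : ∀ a b, |g a - g b| ≤ ‖v a - v b‖ := by
    intro a b
    rw [abs_sub_le_iff]
    constructor
    · linarith [key a b]
    · have := key b a
      rw [norm_sub_rev (v b) (v a)] at this
      linarith
  -- choose the sign
  set s : ℝ := if 0 < Ω a₀ then 1 else -1 with hs
  have hsabs : |s| = 1 := by
    rw [hs]; split <;> simp
  have hspos : 0 < s * Ω a₀ := by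
    rw [hs]
    rcases lt_trichotomy (Ω a₀) 0 with h | h | h
    · rw [if_neg (by linarith)]; nlinarith
    · exact absurd h ha₀
    · rw [if_pos h]; linarith
  set y0 : Fin n → ℝ := fun a => s * g a with hy0
  have hy0S : y0 ∈ {y : Fin n → ℝ | ∀ a b, |y a - y b| ≤ ‖v a - v b‖} := by
    intro a b
    have : |y0 a - y0 b| = |s| * |g a - g b| := by
      rw [hy0, ← abs_mul]; ring_nf
    rw [this, hsabs, one_mul]
    exact hglip a b
  have hfy0 : f y0 = s * Ω a₀ * g a₀ := by
    show (∑ a, Ω a * y0 a) = s * Ω a₀ * g a₀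
    rw [Finset.sum_eq_single a₀]
    · simp [hy0]; ring
    · intro b _ hb
      have hbT : b ∈ T := Finset.mem_erase.mpr ⟨hb, Finset.mem_univ b⟩
      simp [hy0, hgzero b hbT]
    · intro h; exact absurd (Finset.mem_univ a₀) h
  have hpos : 0 < f ystar := by
    have h1 : 0 < f y0 := by
      rw [hfy0]
      exact mul_pos hspos hgpos
    exact lt_of_lt_of_le h1 (htrans y0 hy0S)
  exact ⟨ystar, hyK.2, hyK.1, htrans, hpos⟩
end

section
/- Let M > 0 and let D ⊆ ℝ² be an open set with |u| ≤ M and |v| ≤ M for all (u,v) ∈ D. Let s : ℝ → ℝ be a C¹ function with s([0,1]) ⊆ [1/2, 1], s(h) = h for h ∈ [3/4, 1], and c ≤ s′(h) ≤ B on [0,1] for constants 0 < c ≤ B. Then there exists a constant C > 0, depending only on M, c, and B, such that for every C¹ map φ : D × [1/2, 1] → ℝ³, the map φ̂(u,v,h) := φ(u,v,s(h)) on D × (0, 1] satisfies ∫_{D×(0,1]} ( ‖φ̂_u‖² + ‖φ̂_v‖² + ‖−u φ̂_u − v φ̂_v + h φ̂_h‖² ) du dv dh ≤ C ∫_{D×[1/2,1]}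 ( ‖φ_u‖² + ‖φ_v‖² + ‖−u φ_u − v φ_v + h φ_h‖² ) du dv dh. -/
set_option maxHeartbeats 1000000

open MeasureTheory

/-- The cone energy density of a map `g(u, v, h)` with values in `ℝ³`:
`‖g_u‖² + ‖g_v‖² + ‖−u g_u − v g_v + h g_h‖²`. -/
noncomputable def coneDensity (g : (ℝ × ℝ) × ℝ → EuclideanSpace ℝ (Fin 3))
    (p : (ℝ × ℝ) × ℝ) : ℝ :=
  ‖fderiv ℝ g p ((1, 0), 0)‖ ^ 2 + ‖fderiv ℝ g p ((0, 1), 0)‖ ^ 2 +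
    ‖(-p.1.1) • fderiv ℝ g p ((1, 0), 0) + (-p.1.2) • fderiv ℝ g p ((0, 1), 0)
        + p.2 • fderiv ℝ g p ((0, 0), 1)‖ ^ 2

theorem coneDensity_nonneg (g : (ℝ × ℝ) × ℝ → EuclideanSpace ℝ (Fin 3))
    (p : (ℝ × ℝ) × ℝ) : 0 ≤ coneDensity g p := by
  unfold coneDensity; positivity

theorem coneDensity_continuous (g : (ℝ × ℝ) × ℝ → EuclideanSpace ℝ (Fin 3))
    (hg : ContDiff ℝ 1 g) : Continuous (coneDensity g) := by
  have h1 : Continuous (fderiv ℝ g) := hg.continuous_fderiv one_ne_zero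
  have he : ∀ X : (ℝ × ℝ) × ℝ, Continuous fun p => fderiv ℝ g p X := fun X =>
    (ContinuousLinearMap.apply ℝ (EuclideanSpace ℝ (Fin 3)) X).continuous.comp h1
  unfold coneDensity
  exact (((he _).norm.pow 2).add ((he _).norm.pow 2)).add
    (((((continuous_fst.fst.neg).smul (he _)).add
      ((continuous_fst.snd.neg).smul (he _))).add
      (continuous_snd.smul (he _))).norm.pow 2)

/-- The analytic core of Lemma 1 (vertex extension): extending a map from the outer half of the
cone `D × [1/2, 1]` to `D × (0, 1]` by the reparametrization `h ↦ s(h)` (where `s` maps `[0,1]`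
into `[1/2,1]`, equals the identity on `[3/4,1]`, and has `c ≤ s′ ≤ B`) increases the cone energy
by at most a factor `C` depending only on `M`, `c` and `B`. -/
theorem stmt9 (M c B : ℝ) (hM : 0 < M) (hc : 0 < c) (hcB : c ≤ B) :
    ∃ C > 0, ∀ D : Set (ℝ × ℝ), IsOpen D → (∀ p ∈ D, |p.1| ≤ M ∧ |p.2| ≤ M) →
      ∀ s : ℝ → ℝ, ContDiff ℝ 1 s →
        (∀ h ∈ Set.Icc (0 : ℝ) 1, s h ∈ Set.Icc (1 / 2 : ℝ) 1) →
        (∀ h ∈ Set.Icc (3 / 4 : ℝ) 1, s h = h) →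
        (∀ h ∈ Set.Icc (0 : ℝ) 1, c ≤ deriv s h ∧ deriv s h ≤ B) →
        ∀ φ : (ℝ × ℝ) × ℝ → EuclideanSpace ℝ (Fin 3), ContDiff ℝ 1 φ →
          (∫ p in D ×ˢ Set.Ioc (0 : ℝ) 1, coneDensity (fun q => φ (q.1, s q.2)) p)
            ≤ C * ∫ p in D ×ˢ Set.Icc (1 / 2 : ℝ) 1, coneDensity φ p := by
  have hB : 0 < B := lt_of_lt_of_le hc hcB
  set K : ℝ := 1 + 3 * ((2 * B + 1) * (M + 1)) ^ 2 with hKdef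
  have hKpos : 0 < K := by positivity
  refine ⟨K / c, by positivity, ?_⟩
  intro D hD hDM s hs hsmem hsid hsder φ hφ
  set ψ : (ℝ × ℝ) × ℝ → EuclideanSpace ℝ (Fin 3) := fun q => φ (q.1, s q.2) with hψdef
  have hψ : ContDiff ℝ 1 ψ := hφ.comp (contDiff_fst.prodMk (hs.comp contDiff_snd))
  -- pointwise key inequality
  have key : ∀ (u v h : ℝ), |u| ≤ M → |v| ≤ M → h ∈ Set.Icc (0:ℝ) 1 →
      coneDensity ψ ((u, v), h) ≤ K * coneDensity φ ((u, v), s h) := by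
    intro u v h hu hv hh
    obtain ⟨hσ1, hσ2⟩ := hsmem h hh
    obtain ⟨hd1, hd2⟩ := hsder h hh
    have hd0 : 0 < deriv s h := lt_of_lt_of_le hc hd1
    set σ := s h with hσdef
    set d := deriv s h with hddef
    have hσpos : 0 < σ := lt_of_lt_of_le (by norm_num) hσ1
    have hσne : σ ≠ 0 := ne_of_gt hσpos
    -- chain rule
    have hsd : HasDerivAt s d h := (hs.differentiable one_ne_zero h).hasDerivAt
    have hT : HasFDerivAt (fun q : (ℝ × ℝ) × ℝ => (q.1, s q.2))
        ((ContinuousLinearMap.fst ℝ (ℝ × ℝ) ℝ).prod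
          (d • ContinuousLinearMap.snd ℝ (ℝ × ℝ) ℝ)) ((u, v), h) :=
      (hasFDerivAt_fst).prodMk (hsd.comp_hasFDerivAt _ hasFDerivAt_snd)
    have hφd : HasFDerivAt φ (fderiv ℝ φ ((u, v), σ)) ((u, v), σ) :=
      (hφ.differentiable one_ne_zero _).hasFDerivAt
    have hψd : HasFDerivAt ψ ((fderiv ℝ φ ((u, v), σ)).comp
        ((ContinuousLinearMap.fst ℝ (ℝ × ℝ) ℝ).prod
          (d • ContinuousLinearMap.snd ℝ (ℝ × ℝ) ℝ))) ((u, v), h) :=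
      HasFDerivAt.comp _ hφd hT
    have hfd := hψd.fderiv
    set a := fderiv ℝ φ ((u, v), σ) ((1, 0), 0) with ha
    set b := fderiv ℝ φ ((u, v), σ) ((0, 1), 0) with hb
    set w := fderiv ℝ φ ((u, v), σ) ((0, 0), 1) with hw
    have ea : fderiv ℝ ψ ((u, v), h) ((1, 0), 0) = a := by
      rw [hfd]; simp [ha]
    have eb : fderiv ℝ ψ ((u, v), h) ((0, 1), 0) = b := by
      rw [hfd]; simp [hb]
    have ew : fderiv ℝ ψ ((u, v), h) ((0, 0), 1) = d • w := by
      rw [hfd]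
      have h1 : ((ContinuousLinearMap.fst ℝ (ℝ × ℝ) ℝ).prod
          (d • ContinuousLinearMap.snd ℝ (ℝ × ℝ) ℝ)) ((((0:ℝ),(0:ℝ)),(1:ℝ)))
            = d • ((((0:ℝ),(0:ℝ)),(1:ℝ))) := by
        simp [Prod.ext_iff]
      rw [ContinuousLinearMap.comp_apply, h1, _root_.map_smul, hw]
    have lhs_eq : coneDensity ψ ((u, v), h)
        = ‖a‖ ^ 2 + ‖b‖ ^ 2 + ‖(-u) • a + (-v) • b + h • (d • w)‖ ^ 2 := by
      simp only [coneDensity, ea, eb, ew]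
    have rhs_eq : coneDensity φ ((u, v), σ)
        = ‖a‖ ^ 2 + ‖b‖ ^ 2 + ‖(-u) • a + (-v) • b + σ • w‖ ^ 2 := by
      simp only [coneDensity]; rfl
    rw [lhs_eq, rhs_eq]
    -- algebra
    set X := (-u) • a + (-v) • b + σ • w with hX
    set r := h * d / σ with hr
    have hid : (-u) • a + (-v) • b + h • (d • w)
        = r • X + ((r - 1) * u) • a + ((r - 1) * v) • b := by
      rw [hX, hr]
      match_scalars
      · field_simp; ring
      · field_simp; ring
      · field_simp
    have hr0 : 0 ≤ r :=
      div_nonneg (mul_nonneg hh.1 hd0.le) hσpos.le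
    have hrB : r ≤ 2 * B := by
      rw [hr, div_le_iff₀ hσpos]
      nlinarith [hh.1, hh.2]
    have habs : |r - 1| ≤ 2 * B + 1 := abs_le.mpr ⟨by linarith, by linarith⟩
    have hn1 : ‖(-u) • a + (-v) • b + h • (d • w)‖
        ≤ 2 * B * ‖X‖ + (2 * B + 1) * M * ‖a‖ + (2 * B + 1) * M * ‖b‖ := by
      rw [hid]
      refine norm_add₃_le.trans ?_
      have e1 : ‖r • X‖ ≤ 2 * B * ‖X‖ := by
        rw [norm_smul, Real.norm_eq_abs, abs_of_nonneg hr0]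
        exact mul_le_mul_of_nonneg_right hrB (norm_nonneg _)
      have e2 : ‖((r - 1) * u) • a‖ ≤ (2 * B + 1) * M * ‖a‖ := by
        rw [norm_smul, Real.norm_eq_abs, abs_mul]
        exact mul_le_mul_of_nonneg_right
          (mul_le_mul habs hu (abs_nonneg _) (by positivity)) (norm_nonneg _)
      have e3 : ‖((r - 1) * v) • b‖ ≤ (2 * B + 1) * M * ‖b‖ := by
        rw [norm_smul, Real.norm_eq_abs, abs_mul]
        exact mul_le_mul_of_nonneg_right
          (mul_le_mul habs hv (abs_nonneg _) (by positivity)) (norm_nonneg _)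
      linarith
    have hn2 : ‖(-u) • a + (-v) • b + h • (d • w)‖ ^ 2
        ≤ (2 * B * ‖X‖ + (2 * B + 1) * M * ‖a‖ + (2 * B + 1) * M * ‖b‖) ^ 2 :=
      pow_le_pow_left₀ (norm_nonneg _) hn1 2
    have h3 : (2 * B * ‖X‖ + (2 * B + 1) * M * ‖a‖ + (2 * B + 1) * M * ‖b‖) ^ 2
        ≤ 3 * ((2 * B) ^ 2 * ‖X‖ ^ 2 + ((2 * B + 1) * M) ^ 2 * ‖a‖ ^ 2
          + ((2 * B + 1) * M) ^ 2 * ‖b‖ ^ 2) := by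
      nlinarith [sq_nonneg (2 * B * ‖X‖ - (2 * B + 1) * M * ‖a‖),
        sq_nonneg (2 * B * ‖X‖ - (2 * B + 1) * M * ‖b‖),
        sq_nonneg ((2 * B + 1) * M * ‖a‖ - (2 * B + 1) * M * ‖b‖)]
    have hcoef1 : 3 * (2 * B) ^ 2 ≤ K - 1 := by
      rw [hKdef]; nlinarith
    have hcoef2 : 3 * ((2 * B + 1) * M) ^ 2 ≤ K - 1 := by
      rw [hKdef]; nlinarith
    have m1 := mul_le_mul_of_nonneg_right hcoef1 (sq_nonneg ‖X‖)
    have m2 := mul_le_mul_of_nonneg_right hcoef2 (sq_nonneg ‖a‖)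
    have m3 := mul_le_mul_of_nonneg_right hcoef2 (sq_nonneg ‖b‖)
    have hfin1 : ‖(-u) • a + (-v) • b + h • (d • w)‖ ^ 2
        ≤ (K - 1) * ‖X‖ ^ 2 + (K - 1) * ‖a‖ ^ 2 + (K - 1) * ‖b‖ ^ 2 := by
      linarith [hn2, h3, m1, m2, m3]
    linarith [hfin1, sq_nonneg ‖X‖]
  -- continuity / integrability setup
  have hψc : Continuous (coneDensity ψ) := coneDensity_continuous ψ hψ
  have hφc : Continuous (coneDensity φ) := coneDensity_continuous φ hφ
  have hDsub : ∀ x ∈ D, x ∈ Set.Icc (-M) M ×ˢ Set.Icc (-M) M := by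
    intro x hx
    obtain ⟨h1, h2⟩ := hDM x hx
    exact ⟨Set.mem_Icc.mpr (abs_le.mp h1), Set.mem_Icc.mpr (abs_le.mp h2)⟩
  have hKcompact : IsCompact ((Set.Icc (-M) M ×ˢ Set.Icc (-M) M) ×ˢ Set.Icc (0:ℝ) 1) :=
    (isCompact_Icc.prod isCompact_Icc).prod isCompact_Icc
  have hsub1 : D ×ˢ Set.Ioc (0:ℝ) 1
      ⊆ (Set.Icc (-M) M ×ˢ Set.Icc (-M) M) ×ˢ Set.Icc (0:ℝ) 1 :=
    Set.prod_mono (fun x hx => hDsub x hx) Set.Ioc_subset_Icc_self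
  have hsub2 : D ×ˢ Set.Icc (1/2:ℝ) 1
      ⊆ (Set.Icc (-M) M ×ˢ Set.Icc (-M) M) ×ˢ Set.Icc (0:ℝ) 1 :=
    Set.prod_mono (fun x hx => hDsub x hx) (Set.Icc_subset_Icc (by norm_num) le_rfl)
  have Iψ : IntegrableOn (coneDensity ψ) (D ×ˢ Set.Ioc (0:ℝ) 1) volume :=
    (hψc.continuousOn.integrableOn_compact hKcompact).mono_set hsub1
  have Iφ : IntegrableOn (coneDensity φ) (D ×ˢ Set.Icc (1/2:ℝ) 1) volume :=
    (hφc.continuousOn.integrableOn_compact hKcompact).mono_set hsub2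
  have hvol : (volume : Measure ((ℝ × ℝ) × ℝ)) = (volume : Measure (ℝ × ℝ)).prod volume := rfl
  rw [hvol] at Iψ Iφ
  rw [show (∫ p in D ×ˢ Set.Ioc (0:ℝ) 1, coneDensity ψ p)
      = ∫ p in D ×ˢ Set.Ioc (0:ℝ) 1, coneDensity ψ p
        ∂((volume : Measure (ℝ × ℝ)).prod volume) from rfl,
    show (∫ p in D ×ˢ Set.Icc (1/2:ℝ) 1, coneDensity φ p)
      = ∫ p in D ×ˢ Set.Icc (1/2:ℝ) 1, coneDensity φ p
        ∂((volume : Measure (ℝ × ℝ)).prod volume) from rfl,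
    setIntegral_prod _ Iψ, setIntegral_prod _ Iφ, ← integral_const_mul]
  -- fiberwise integrability
  simp only [IntegrableOn] at Iψ Iφ
  rw [← Measure.prod_restrict] at Iψ Iφ
  have IF : IntegrableOn (fun x => ∫ h in Set.Ioc (0:ℝ) 1, coneDensity ψ (x, h)) D volume :=
    Iψ.integral_prod_left
  have IG : IntegrableOn (fun x => (K / c) *
      ∫ y in Set.Icc (1/2:ℝ) 1, coneDensity φ (x, y)) D volume :=
    (Iφ.integral_prod_left).const_mul _
  refine setIntegral_mono_on IF IG hD.measurableSet ?_
  intro x hx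
  obtain ⟨u, v⟩ := x
  obtain ⟨hu, hv⟩ := hDM (u, v) hx
  set g : ℝ → ℝ := fun y => coneDensity φ ((u, v), y) with hgdef
  have hgc : Continuous g := hφc.comp (Continuous.prodMk_right (u, v))
  have hg0 : ∀ y, 0 ≤ g y := fun y => coneDensity_nonneg φ _
  have s1 : s 1 = 1 := hsid 1 (by norm_num)
  have s0mem := hsmem 0 (by norm_num)
  have hs01 : s 0 ≤ s 1 := by rw [s1]; exact s0mem.2
  have hInt1 : IntegrableOn (fun h => coneDensity ψ ((u, v), h)) (Set.Ioc (0:ℝ) 1) volume :=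
    (((hψc.comp (Continuous.prodMk_right (u, v))).continuousOn.integrableOn_compact
      isCompact_Icc)).mono_set Set.Ioc_subset_Icc_self
  have hInt2 : IntegrableOn (fun h => (K / c) * (deriv s h * g (s h)))
      (Set.Ioc (0:ℝ) 1) volume := by
    refine ((Continuous.continuousOn ?_).integrableOn_compact
      isCompact_Icc).mono_set Set.Ioc_subset_Icc_self
    exact continuous_const.mul ((hs.continuous_deriv le_rfl).mul (hgc.comp hs.continuous))
  have hIntg : IntegrableOn g (Set.Icc (1/2:ℝ) 1) volume :=
    hgc.continuousOn.integrableOn_compact isCompact_Icc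
  calc ∫ h in Set.Ioc (0:ℝ) 1, coneDensity ψ ((u, v), h)
      ≤ ∫ h in Set.Ioc (0:ℝ) 1, (K / c) * (deriv s h * g (s h)) := by
        refine setIntegral_mono_on hInt1 hInt2 measurableSet_Ioc ?_
        intro h hh
        have hh' : h ∈ Set.Icc (0:ℝ) 1 := Set.Ioc_subset_Icc_self hh
        have h1 := key u v h hu hv hh'
        have h2 := (hsder h hh').1
        have h3 : 0 ≤ g (s h) := hg0 _
        have h4 : K / c * (c * g (s h)) ≤ K / c * (deriv s h * g (s h)) :=
          mul_le_mul_of_nonneg_left (mul_le_mul_of_nonneg_right h2 h3) (by positivity)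
        have h5 : K / c * (c * g (s h)) = K * g (s h) := by field_simp
        have h6 : coneDensity φ ((u, v), s h) = g (s h) := rfl
        rw [h6] at h1
        calc coneDensity ψ ((u, v), h) ≤ K * g (s h) := h1
          _ = K / c * (c * g (s h)) := h5.symm
          _ ≤ K / c * (deriv s h * g (s h)) := h4
    _ = (K / c) * ∫ h in Set.Ioc (0:ℝ) 1, deriv s h * g (s h) := integral_const_mul _ _
    _ = (K / c) * ∫ y in Set.Ioc (s 0) (s 1), g y := by
        congr 1
        have hcv := intervalIntegral.integral_comp_smul_deriv
          (f := s) (f' := deriv s) (g := g) (a := (0:ℝ)) (b := 1)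
          (fun x _ => (hs.differentiable one_ne_zero x).hasDerivAt)
          ((hs.continuous_deriv le_rfl).continuousOn) hgc
        simp only [smul_eq_mul, Function.comp] at hcv
        rw [← intervalIntegral.integral_of_le (by norm_num : (0:ℝ) ≤ 1),
          ← intervalIntegral.integral_of_le hs01]
        exact hcv
    _ ≤ (K / c) * ∫ y in Set.Icc (1/2:ℝ) 1, g y := by
        refine mul_le_mul_of_nonneg_left ?_ (by positivity)
        refine setIntegral_mono_set hIntg (Filter.Eventually.of_forall hg0)
          (HasSubset.Subset.eventuallyLE ?_)
        intro y hy
        exact ⟨le_trans s0mem.1 hy.1.le, hy.2.trans_eq s1⟩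
end

section
/- Let 0 < ε ≤ 1/2. Let p : ℝ → ℝ² be a C¹ map with ‖p(t)‖ ≤ ε for all t, and set p∥(t) = √(1 − ‖p(t)‖²). Let ψ : ℝ → [0, 1] and s : ℝ → ℝ be C¹ functions. Define q(t) = (1 − ψ(t))·p(s(t)) and q∥(t) = √(1 − ‖q(t)‖²). Then q∥ is C¹ and for every t, ‖q′(t)‖² + (q∥′(t))² ≤ 4 (ψ′(t))² ε² + 2 (s′(t))² ( ‖p′(s(t))‖² + (p∥′(s(t)))² ). -/
set_option maxHeartbeats 1000000 in
private lemma stmt10_scalar (a b σ w nu nv ε Q : ℝ) (hnu : 0 ≤ nu) (hnuε : nu ≤ ε)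
    (hε2 : ε ≤ 1 / 2) (ha0 : 0 ≤ a) (ha1 : a ≤ 1)
    (hQ : Q ≤ 2 * b ^ 2 * nu ^ 2 + 2 * a ^ 2 * σ ^ 2 * nv ^ 2) :
    Q + (a ^ 2 * σ * w - a * b * nu ^ 2) ^ 2 / (1 - a ^ 2 * nu ^ 2)
      ≤ 4 * b ^ 2 * ε ^ 2 + 2 * σ ^ 2 * (nv ^ 2 + w ^ 2 / (1 - nu ^ 2)) := by
  have hεnn : 0 ≤ ε := le_trans hnu hnuε
  have hnu2 : nu ^ 2 ≤ 1 / 4 := by nlinarith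
  have hnuε2 : nu ^ 2 ≤ ε ^ 2 := by nlinarith
  have hD0 : (3 : ℝ) / 4 ≤ 1 - nu ^ 2 := by nlinarith
  have ha2 : a ^ 2 ≤ 1 := by nlinarith
  have hD : 1 - nu ^ 2 ≤ 1 - a ^ 2 * nu ^ 2 := by
    nlinarith [mul_le_mul_of_nonneg_right ha2 (sq_nonneg nu)]
  have hD0pos : (0 : ℝ) < 1 - nu ^ 2 := by linarith
  have hDpos : (0 : ℝ) < 1 - a ^ 2 * nu ^ 2 := by linarith
  have hnum : (a ^ 2 * σ * w - a * b * nu ^ 2) ^ 2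
      ≤ 2 * (a * b * nu ^ 2) ^ 2 + 2 * (a ^ 2 * σ * w) ^ 2 := by
    nlinarith [sq_nonneg (a ^ 2 * σ * w + a * b * nu ^ 2)]
  have t1 : 2 * (a * b * nu ^ 2) ^ 2 / (1 - a ^ 2 * nu ^ 2) ≤ 2 * b ^ 2 * ε ^ 2 := by
    rw [div_le_iff₀ hDpos]
    have hnu4 : nu ^ 2 * nu ^ 2 ≤ ε ^ 2 * (1 / 4) :=
      mul_le_mul hnuε2 hnu2 (sq_nonneg nu) (sq_nonneg ε)
    have f1 : a ^ 2 * (b ^ 2 * (nu ^ 2 * nu ^ 2)) ≤ 1 * (b ^ 2 * (nu ^ 2 * nu ^ 2)) :=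
      mul_le_mul_of_nonneg_right ha2 (by positivity)
    have f2 : 2 * b ^ 2 * (nu ^ 2 * nu ^ 2) ≤ 2 * b ^ 2 * (ε ^ 2 * (1 / 4)) :=
      mul_le_mul_of_nonneg_left hnu4 (by positivity)
    have f3 : 2 * b ^ 2 * ε ^ 2 * (3 / 4) ≤ 2 * b ^ 2 * ε ^ 2 * (1 - a ^ 2 * nu ^ 2) :=
      mul_le_mul_of_nonneg_left (le_trans hD0 hD) (by positivity)
    linarith [f1, f2, f3, sq_nonneg (b * ε)]
  have t2 : 2 * (a ^ 2 * σ * w) ^ 2 / (1 - a ^ 2 * nu ^ 2)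
      ≤ 2 * σ ^ 2 * w ^ 2 / (1 - nu ^ 2) := by
    apply div_le_div₀ (by positivity) ?_ hD0pos hD
    have f4 : a ^ 2 * a ^ 2 ≤ 1 * 1 := mul_le_mul ha2 ha2 (sq_nonneg a) zero_le_one
    calc 2 * (a ^ 2 * σ * w) ^ 2 = a ^ 2 * a ^ 2 * (2 * (σ * w) ^ 2) := by ring
      _ ≤ 1 * 1 * (2 * (σ * w) ^ 2) := mul_le_mul_of_nonneg_right f4 (by positivity)
      _ = 2 * σ ^ 2 * w ^ 2 := by ring
  have hsplit : (a ^ 2 * σ * w - a * b * nu ^ 2) ^ 2 / (1 - a ^ 2 * nu ^ 2)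
      ≤ 2 * b ^ 2 * ε ^ 2 + 2 * σ ^ 2 * w ^ 2 / (1 - nu ^ 2) := by
    have h1 : (a ^ 2 * σ * w - a * b * nu ^ 2) ^ 2 / (1 - a ^ 2 * nu ^ 2)
        ≤ (2 * (a * b * nu ^ 2) ^ 2 + 2 * (a ^ 2 * σ * w) ^ 2) / (1 - a ^ 2 * nu ^ 2) := by
      gcongr
    rw [add_div] at h1
    linarith
  have hQ' : Q ≤ 2 * b ^ 2 * ε ^ 2 + 2 * σ ^ 2 * nv ^ 2 := by
    have g1 : 2 * b ^ 2 * nu ^ 2 ≤ 2 * b ^ 2 * ε ^ 2 :=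
      mul_le_mul_of_nonneg_left hnuε2 (by positivity)
    have g2 : a ^ 2 * (2 * σ ^ 2 * nv ^ 2) ≤ 1 * (2 * σ ^ 2 * nv ^ 2) :=
      mul_le_mul_of_nonneg_right ha2 (by positivity)
    linarith [g1, g2]
  have hrw : 2 * σ ^ 2 * (nv ^ 2 + w ^ 2 / (1 - nu ^ 2))
      = 2 * σ ^ 2 * nv ^ 2 + 2 * σ ^ 2 * w ^ 2 / (1 - nu ^ 2) := by ring
  rw [hrw]
  linarith

private lemma stmt10_sqrt_deriv {E : Type*} [NormedAddCommGroup E] [InnerProductSpace ℝ E]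
    {g : ℝ → E} {g' : E} {t : ℝ} (hg : HasDerivAt g g' t) (hb : ‖g t‖ ≤ 1 / 2) :
    HasDerivAt (fun t' => Real.sqrt (1 - ‖g t'‖ ^ 2))
      (-(inner ℝ (g t) g' : ℝ) / Real.sqrt (1 - ‖g t‖ ^ 2)) t := by
  have hpos : (0 : ℝ) < 1 - ‖g t‖ ^ 2 := by nlinarith [norm_nonneg (g t)]
  have hne : 1 - ‖g t‖ ^ 2 ≠ 0 := ne_of_gt hpos
  have hinner : HasDerivAt (fun t' => 1 - (inner ℝ (g t') (g t') : ℝ))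
      (0 - ((inner ℝ (g t) g' : ℝ) + inner ℝ g' (g t))) t :=
    (hasDerivAt_const t (1 : ℝ)).sub (HasDerivAt.inner ℝ hg hg)
  have h2 : HasDerivAt (fun t' => 1 - ‖g t'‖ ^ 2)
      (0 - ((inner ℝ (g t) g' : ℝ) + inner ℝ g' (g t))) t := by
    simpa only [real_inner_self_eq_norm_sq] using hinner
  have h3 := h2.sqrt hne
  have hS : Real.sqrt (1 - ‖g t‖ ^ 2) ≠ 0 := Real.sqrt_ne_zero'.mpr hpos
  have heq : -(inner ℝ (g t) g' : ℝ) / Real.sqrt (1 - ‖g t‖ ^ 2)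
      = (0 - ((inner ℝ (g t) g' : ℝ) + inner ℝ g' (g t))) / (2 * Real.sqrt (1 - ‖g t‖ ^ 2)) := by
    rw [real_inner_comm g' (g t)]
    field_simp
    ring
  exact heq ▸ h3

set_option maxHeartbeats 1000000 in
/-- Pointwise derivative estimate at the heart of Lemma 2 (edge extension): given a `C¹` curve
`p` in `ℝ²` with `‖p‖ ≤ ε ≤ 1/2`, its parallel part `p∥ = √(1 − ‖p‖²)`, a `C¹` cutoff
`ψ : ℝ → [0,1]` and a `C¹` reparametrization `s`, the damped reparametrized curve
`q(t) = (1 − ψ(t))·p(s(t))` with parallel part `q∥ = √(1 − ‖q‖²)` satisfies: `q∥` is `C¹` and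
`‖q′‖² + (q∥′)² ≤ 4ψ′²ε² + 2s′²(‖p′∘s‖² + (p∥′∘s)²)` pointwise. -/
theorem stmt10 (ε : ℝ) (hε : 0 < ε) (hε' : ε ≤ 1 / 2)
    (p : ℝ → EuclideanSpace ℝ (Fin 2)) (hp : ContDiff ℝ 1 p)
    (hpε : ∀ t, ‖p t‖ ≤ ε)
    (ψ : ℝ → ℝ) (hψ : ContDiff ℝ 1 ψ) (hψ01 : ∀ t, ψ t ∈ Set.Icc (0 : ℝ) 1)
    (s : ℝ → ℝ) (hs : ContDiff ℝ 1 s) :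
    ContDiff ℝ 1 (fun t => Real.sqrt (1 - ‖(1 - ψ t) • p (s t)‖ ^ 2)) ∧
      ∀ t,
        ‖deriv (fun t' => (1 - ψ t') • p (s t')) t‖ ^ 2
            + (deriv (fun t' => Real.sqrt (1 - ‖(1 - ψ t') • p (s t')‖ ^ 2)) t) ^ 2
          ≤ 4 * (deriv ψ t) ^ 2 * ε ^ 2
            + 2 * (deriv s t) ^ 2 *
              (‖deriv p (s t)‖ ^ 2
                + (deriv (fun x => Real.sqrt (1 - ‖p x‖ ^ 2)) (s t)) ^ 2) := by
  have hq : ContDiff ℝ 1 (fun t => (1 - ψ t) • p (s t)) :=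
    (contDiff_const.sub hψ).smul (hp.comp hs)
  -- basic bounds
  have hqε : ∀ t, ‖(1 - ψ t) • p (s t)‖ ≤ ε := by
    intro t
    obtain ⟨h0, h1⟩ := hψ01 t
    rw [norm_smul, Real.norm_eq_abs, abs_of_nonneg (by linarith)]
    calc (1 - ψ t) * ‖p (s t)‖ ≤ 1 * ε :=
          mul_le_mul (by linarith) (hpε (s t)) (norm_nonneg _) one_pos.le
      _ = ε := one_mul ε
  have hqhalf : ∀ t, ‖(1 - ψ t) • p (s t)‖ ≤ 1 / 2 := fun t => le_trans (hqε t) hε'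
  have hphalf : ∀ x, ‖p x‖ ≤ 1 / 2 := fun x => le_trans (hpε x) hε'
  have hfpos : ∀ t, (0 : ℝ) < 1 - ‖(1 - ψ t) • p (s t)‖ ^ 2 := by
    intro t; nlinarith [hqhalf t, norm_nonneg ((1 - ψ t) • p (s t))]
  constructor
  · rw [contDiff_iff_contDiffAt]
    intro t
    exact ((contDiff_const.sub (ContDiff.norm_sq ℝ hq)).contDiffAt).sqrt (ne_of_gt (hfpos t))
  intro t
  obtain ⟨h0, h1⟩ := hψ01 t
  set u := p (s t) with hu
  set v := deriv p (s t) with hv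
  set a := 1 - ψ t with ha
  set b := deriv ψ t with hb
  set σ := deriv s t with hσ
  have hpd : HasDerivAt p v (s t) := (hp.differentiable one_ne_zero (s t)).hasDerivAt
  have hsd : HasDerivAt s σ t := (hs.differentiable one_ne_zero t).hasDerivAt
  have hψd : HasDerivAt ψ b t := (hψ.differentiable one_ne_zero t).hasDerivAt
  have hcomp : HasDerivAt (fun t' => p (s t')) (σ • v) t := hpd.scomp t hsd
  have hconst : HasDerivAt (fun t' => 1 - ψ t') (-b) t := by
    exact hψd.const_sub (1 : ℝ)
  have hqd : HasDerivAt (fun t' => (1 - ψ t') • p (s t'))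
      (a • (σ • v) + (-b) • u) t := hconst.smul hcomp
  have hqsqrt : HasDerivAt (fun t' => Real.sqrt (1 - ‖(1 - ψ t') • p (s t')‖ ^ 2))
      (-(inner ℝ (a • u) (a • (σ • v) + (-b) • u) : ℝ) / Real.sqrt (1 - ‖a • u‖ ^ 2)) t :=
    stmt10_sqrt_deriv hqd (hqhalf t)
  have hpsqrt : HasDerivAt (fun x => Real.sqrt (1 - ‖p x‖ ^ 2))
      (-(inner ℝ u v : ℝ) / Real.sqrt (1 - ‖u‖ ^ 2)) (s t) :=
    stmt10_sqrt_deriv hpd (hphalf (s t))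
  rw [hqd.deriv, hqsqrt.deriv, hpsqrt.deriv]
  -- rewrite squares of the sqrt-derivatives
  have haε : ‖a • u‖ ≤ ε := hqε t
  have hSq : Real.sqrt (1 - ‖a • u‖ ^ 2) ^ 2 = 1 - ‖a • u‖ ^ 2 :=
    Real.sq_sqrt (by nlinarith [norm_nonneg (a • u)])
  have hS0q : Real.sqrt (1 - ‖u‖ ^ 2) ^ 2 = 1 - ‖u‖ ^ 2 :=
    Real.sq_sqrt (by nlinarith [hphalf (s t), norm_nonneg u])
  have e1 : (-(inner ℝ (a • u) (a • (σ • v) + (-b) • u) : ℝ) / Real.sqrt (1 - ‖a • u‖ ^ 2)) ^ 2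
      = (inner ℝ (a • u) (a • (σ • v) + (-b) • u) : ℝ) ^ 2 / (1 - ‖a • u‖ ^ 2) := by
    rw [neg_div, neg_sq, div_pow, hSq]
  have e2 : (-(inner ℝ u v : ℝ) / Real.sqrt (1 - ‖u‖ ^ 2)) ^ 2
      = (inner ℝ u v : ℝ) ^ 2 / (1 - ‖u‖ ^ 2) := by
    rw [neg_div, neg_sq, div_pow, hS0q]
  rw [e1, e2]
  have hinner : (inner ℝ (a • u) (a • (σ • v) + (-b) • u) : ℝ)
      = a ^ 2 * σ * (inner ℝ u v : ℝ) - a * b * ‖u‖ ^ 2 := by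
    simp only [inner_add_right, real_inner_smul_left, real_inner_smul_right,
      real_inner_self_eq_norm_sq]
    ring
  have hnormq : ‖a • u‖ ^ 2 = a ^ 2 * ‖u‖ ^ 2 := by
    rw [norm_smul, Real.norm_eq_abs, abs_of_nonneg (by linarith), mul_pow]
  rw [hinner, hnormq]
  -- norm bound for the derivative of q
  have hQ : ‖a • (σ • v) + (-b) • u‖ ^ 2 ≤ 2 * b ^ 2 * ‖u‖ ^ 2 + 2 * a ^ 2 * σ ^ 2 * ‖v‖ ^ 2 := by
    have hle : ‖a • (σ • v) + (-b) • u‖ ≤ ‖a • (σ • v)‖ + ‖(-b) • u‖ := norm_add_le _ _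
    have hsq : ‖a • (σ • v) + (-b) • u‖ ^ 2 ≤ (‖a • (σ • v)‖ + ‖(-b) • u‖) ^ 2 :=
      pow_le_pow_left₀ (norm_nonneg _) hle 2
    have hx2 : ‖a • (σ • v)‖ ^ 2 = a ^ 2 * σ ^ 2 * ‖v‖ ^ 2 := by
      rw [norm_smul, norm_smul, Real.norm_eq_abs, Real.norm_eq_abs, mul_pow, mul_pow,
        sq_abs, sq_abs]
      ring
    have hy2 : ‖(-b) • u‖ ^ 2 = b ^ 2 * ‖u‖ ^ 2 := by
      rw [norm_smul, Real.norm_eq_abs, mul_pow, sq_abs, neg_pow]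
      ring
    nlinarith [hsq, hx2, hy2, sq_nonneg (‖a • (σ • v)‖ - ‖(-b) • u‖)]
  exact stmt10_scalar a b σ (inner ℝ u v : ℝ) ‖u‖ ‖v‖ ε (‖a • (σ • v) + (-b) • u‖ ^ 2)
    (norm_nonneg u) (hpε (s t)) hε' (by linarith) (by linarith) hQ
end
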